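/- Let γ, σ² : [0,1] → ℝ be continuous with σ²(u) > 0 for all u ∈ [0,1] (condition (UE)), let Γ(u) := ∫₀^u γ(v) dv, g := ∫₀¹ γ(v) dv, assume (E1): Γ(u) − g·u > 0 for all u ∈ (0,1), let Ψ(u) := ∫_{1/2}^u σ²(v)/(2(Γ(v) − g·v)) dv, and let p_c := 2(g − γ(1))/σ²(1) ≥ 0. Then for every p > p_c one has Z̄^p := ∫₀¹ exp(p·Ψ(u)) du = +∞ (this includes the heavy-tailed case p_c = 0, i.e. γ(1) = g). -/

import Mathlib

open MeasureTheory Set Filter Topology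

/-- `Γ(u) = ∫₀^u γ(v) dv`. -/
noncomputable def Gam (γ : ℝ → ℝ) (u : ℝ) : ℝ := ∫ v in (0:ℝ)..u, γ v

/-- market mean growth rate `g = ∫₀¹ γ(v) dv`. -/
noncomputable def mg (γ : ℝ → ℝ) : ℝ := ∫ v in (0:ℝ)..1, γ v

/-- `Ψ(u) = ∫_{1/2}^u σ²(v) / (2 (Γ(v) - g v)) dv`. -/
noncomputable def Psi (γ σ2 : ℝ → ℝ) (u : ℝ) : ℝ :=
  ∫ v in (1/2:ℝ)..u, σ2 v / (2 * (Gam γ v - mg γ * v))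

/-- critical diversity index `p_c = 2 (g - γ(1)) / σ²(1)`. -/
noncomputable def pcrit (γ σ2 : ℝ → ℝ) : ℝ := 2 * (mg γ - γ 1) / σ2 1

/-- critical index `q_c = 2 (γ(0) - g) / σ²(0)`. -/
noncomputable def qcrit (γ σ2 : ℝ → ℝ) : ℝ := 2 * (γ 0 - mg γ) / σ2 0

/-- under (UE) and (E1), for every p > p_c (≥ 0),
Z̄^p = ∫₀¹ exp(p Ψ(u)) du = +∞. -/
-- divergence lemma
lemma div_top {u₀ q : ℝ} (hu₀ : u₀ < 1) (hq : 1 < q) :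
    (∫⁻ u in Set.Ioo u₀ 1, ENNReal.ofReal ((1 - u) ^ (-q) : ℝ)) = ⊤ := by
  by_contra hne
  have hmeas : AEStronglyMeasurable (fun u : ℝ => (1 - u) ^ (-q) : ℝ → ℝ)
      (volume.restrict (Set.Ioo u₀ 1)) := by
    refine (ContinuousOn.rpow_const ?_ ?_).aestronglyMeasurable measurableSet_Ioo
    · exact (continuous_const.sub continuous_id).continuousOn
    · intro x hx; exact Or.inl (by simp only [Set.mem_Ioo] at hx; intro h; linarith [hx.2])
  have hnn : 0 ≤ᵐ[volume.restrict (Set.Ioo u₀ 1)] fun u : ℝ => (1 - u) ^ (-q) := by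
    filter_upwards [ae_restrict_mem measurableSet_Ioo] with u hu
    exact Real.rpow_nonneg (by linarith [hu.2]) _
  have hInt : IntegrableOn (fun u : ℝ => (1 - u) ^ (-q)) (Set.Ioo u₀ 1) :=
    (lintegral_ofReal_ne_top_iff_integrable hmeas hnn).mp hne
  have hII : IntervalIntegrable (fun u : ℝ => (1 - u) ^ (-q)) volume u₀ 1 :=
    (intervalIntegrable_iff_integrableOn_Ioo_of_le hu₀.le).mpr hInt
  have h2 := (hII.comp_sub_left 1).symm
  have h3 : IntervalIntegrable (fun x : ℝ => x ^ (-q)) volume (1 - 1) (1 - u₀) := by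
    simpa using h2
  have h4 : IntegrableOn (fun x : ℝ => x ^ (-q)) (Set.Ioo 0 (1 - u₀)) := by
    have := (intervalIntegrable_iff_integrableOn_Ioo_of_le (by linarith : (1:ℝ) - 1 ≤ 1 - u₀)).mp h3
    simpa using this
  rw [intervalIntegral.integrableOn_Ioo_rpow_iff (by linarith : (0:ℝ) < 1 - u₀)] at h4
  linarith

lemma F_repr (γ : ℝ → ℝ) (hγc : ContinuousOn γ (Set.Icc 0 1)) {v : ℝ} (hv : v ∈ Set.Icc (0:ℝ) 1) :
    Gam γ v - mg γ * v = ∫ t in v..1, (mg γ - γ t) := by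
  have h1 : IntervalIntegrable γ volume 0 v := by
    apply (hγc.mono ?_).intervalIntegrable
    rw [Set.uIcc_of_le hv.1]; exact Set.Icc_subset_Icc le_rfl hv.2
  have h2 : IntervalIntegrable γ volume v 1 := by
    apply (hγc.mono ?_).intervalIntegrable
    rw [Set.uIcc_of_le hv.2]; exact Set.Icc_subset_Icc hv.1 le_rfl
  have hadd : Gam γ v + ∫ t in v..1, γ t = mg γ :=
    intervalIntegral.integral_add_adjacent_intervals h1 h2
  have hconst : ∫ t in v..1, (mg γ : ℝ) = (1 - v) * mg γ := by
    simp [intervalIntegral.integral_const, smul_eq_mul]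
  rw [intervalIntegral.integral_sub (intervalIntegrable_const) h2, hconst]
  linarith

lemma key_bound (γ σ2 : ℝ → ℝ) (hγc : ContinuousOn γ (Set.Icc 0 1))
    (hσc : ContinuousOn σ2 (Set.Icc 0 1)) {ε : ℝ} (hε : 0 < ε) :
    ∃ u₀ : ℝ, u₀ ∈ Set.Ico (1/2 : ℝ) 1 ∧ ∀ v ∈ Set.Ico u₀ 1,
      (Gam γ v - mg γ * v ≤ (mg γ - γ 1 + ε) * (1 - v)) ∧ σ2 1 - ε ≤ σ2 v := by
  have h1 : (1:ℝ) ∈ Set.Icc (0:ℝ) 1 := by norm_num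
  obtain ⟨δ₁, hδ₁, hγδ⟩ := Metric.continuousWithinAt_iff.mp (hγc 1 h1) ε hε
  obtain ⟨δ₂, hδ₂, hσδ⟩ := Metric.continuousWithinAt_iff.mp (hσc 1 h1) ε hε
  set δ : ℝ := min (min δ₁ δ₂) (1/2) with hδdef
  have hδpos : 0 < δ := lt_min (lt_min hδ₁ hδ₂) (by norm_num)
  have hδhalf : δ ≤ 1/2 := min_le_right _ _
  have hδ12 : δ ≤ min δ₁ δ₂ := min_le_left _ _
  refine ⟨1 - δ/2, ⟨by linarith, by linarith⟩, ?_⟩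
  intro v hv
  have hv0 : 0 ≤ v := by have := hv.1; linarith
  have hv1 : v < 1 := hv.2
  have hclose : ∀ t ∈ Set.Icc v 1, γ 1 - ε ≤ γ t ∧ σ2 1 - ε ≤ σ2 t := by
    intro t ht
    have htI : t ∈ Set.Icc (0:ℝ) 1 := ⟨le_trans hv0 ht.1, ht.2⟩
    have hdist : dist t 1 < min δ₁ δ₂ := by
      rw [Real.dist_eq, abs_of_nonpos (by linarith [ht.2])]
      have h1t : 1 - δ/2 ≤ t := le_trans hv.1 ht.1
      linarith [lt_min_iff.mp (lt_of_lt_of_le (half_lt_self hδpos) hδ12)]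
    constructor
    · have h := hγδ htI (lt_of_lt_of_le hdist (min_le_left _ _))
      rw [Real.dist_eq] at h
      linarith [(abs_lt.mp h).1]
    · have h := hσδ htI (lt_of_lt_of_le hdist (min_le_right _ _))
      rw [Real.dist_eq] at h
      linarith [(abs_lt.mp h).1]
  refine ⟨?_, (hclose v ⟨le_refl v, hv1.le⟩).2⟩
  rw [F_repr γ hγc ⟨hv0, hv1.le⟩]
  have hint : IntervalIntegrable (fun t => mg γ - γ t) volume v 1 := by
    apply IntervalIntegrable.sub intervalIntegrable_const
    apply (hγc.mono ?_).intervalIntegrable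
    rw [Set.uIcc_of_le hv1.le]; exact Set.Icc_subset_Icc hv0 le_rfl
  calc ∫ t in v..1, (mg γ - γ t)
      ≤ ∫ _t in v..1, (mg γ - γ 1 + ε) := by
        apply intervalIntegral.integral_mono_on hv1.le hint intervalIntegrable_const
        intro t ht
        linarith [(hclose t ht).1]
    _ = (mg γ - γ 1 + ε) * (1 - v) := by
        simp [intervalIntegral.integral_const, smul_eq_mul]; ring

theorem stmt8 (γ σ2 : ℝ → ℝ) (hγc : ContinuousOn γ (Set.Icc 0 1))
    (hσc : ContinuousOn σ2 (Set.Icc 0 1)) (hUE : ∀ u ∈ Set.Icc (0:ℝ) 1, 0 < σ2 u)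
    (hE1 : ∀ u ∈ Set.Ioo (0:ℝ) 1, 0 < Gam γ u - mg γ * u) :
    ∀ p : ℝ, pcrit γ σ2 < p →
      (∫⁻ u in Set.Ioo (0:ℝ) 1, ENNReal.ofReal (Real.exp (p * Psi γ σ2 u))) = ⊤ := by
  intro p hp
  set L : ℝ := mg γ - γ 1 with hLdef
  set S : ℝ := σ2 1 with hSdef
  have hS : 0 < S := hUE 1 (by norm_num)
  -- L ≥ 0
  have hL : 0 ≤ L := by
    by_contra hneg
    push_neg at hneg
    obtain ⟨u₀, hu₀, hb⟩ := key_bound γ σ2 hγc hσc (ε := -L/2) (by linarith)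
    set v : ℝ := (u₀ + 1) / 2 with hvdef
    have hv : v ∈ Set.Ico u₀ 1 := ⟨by rw [hvdef]; linarith [hu₀.2], by rw [hvdef]; linarith [hu₀.2]⟩
    have hvIoo : v ∈ Set.Ioo (0:ℝ) 1 := ⟨by rw [hvdef]; linarith [hu₀.1], hv.2⟩
    have h1 := (hb v hv).1
    have h2 := hE1 v hvIoo
    have : (L + -L/2) * (1 - v) < 0 := by
      apply mul_neg_of_neg_of_pos (by linarith) (by linarith [hv.2])
    linarith
  have hp0 : 0 < p := lt_of_le_of_lt (by rw [pcrit]; positivity) hp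
  have hpS : 2 * L < p * S := by
    rw [pcrit, div_lt_iff₀ hS] at hp
    linarith
  -- choose ε
  set ε : ℝ := min (S/2) ((p*S - 2*L)/(p+2)/2) with hεdef
  have hε : 0 < ε := by
    apply lt_min (by linarith)
    have : 0 < (p*S - 2*L)/(p+2) := div_pos (by linarith) (by linarith)
    linarith
  have hεS : ε < S := lt_of_le_of_lt (min_le_left _ _) (by linarith)
  have hkey : 2 * (L + ε) < p * (S - ε) := by
    have h1 : ε ≤ (p*S - 2*L)/(p+2)/2 := min_le_right _ _
    have h2 : (p*S - 2*L)/(p+2)/2 < (p*S - 2*L)/(p+2) :=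
      half_lt_self (div_pos (by linarith) (by linarith))
    have h3 : ε * (p+2) < p*S - 2*L := by
      rw [← lt_div_iff₀ (by linarith : (0:ℝ) < p+2)]
      linarith
    nlinarith
  have hLε : 0 < L + ε := by linarith
  set c : ℝ := (S - ε) / (2 * (L + ε)) with hcdef
  set q : ℝ := p * c with hqdef
  have hq : 1 < q := by
    rw [hqdef, hcdef, ← mul_div_assoc, lt_div_iff₀ (by linarith : (0:ℝ) < 2*(L+ε))]
    linarith
  obtain ⟨u₀, hu₀, hb⟩ := key_bound γ σ2 hγc hσc hε
  have hu₀h : (1/2:ℝ) ≤ u₀ := hu₀.1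
  have hu₀1 : u₀ < 1 := hu₀.2
  -- continuity of F on Icc 0 1
  set F : ℝ → ℝ := fun v => Gam γ v - mg γ * v with hFdef
  have hGamc : ContinuousOn (Gam γ) (Set.Icc 0 1) := by
    have : Set.Icc (0:ℝ) 1 = Set.uIcc (0:ℝ) 1 := by rw [Set.uIcc_of_le]; norm_num
    rw [this]
    exact intervalIntegral.continuousOn_primitive_interval
      (by rw [← this]; exact hγc.integrableOn_Icc)
  have hFc : ContinuousOn F (Set.Icc 0 1) :=
    hGamc.sub ((continuous_const.mul continuous_id).continuousOn)
  have hFpos : ∀ v ∈ Set.Ioo (0:ℝ) 1, 0 < F v := hE1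
  -- the integrand
  set h : ℝ → ℝ := fun v => σ2 v / (2 * F v) with hhdef
  have hhc : ∀ b ∈ Set.Ico (1/2:ℝ) 1, ContinuousOn h (Set.Icc (1/2) b) := by
    intro b hb'
    have hsub : Set.Icc (1/2:ℝ) b ⊆ Set.Icc 0 1 :=
      Set.Icc_subset_Icc (by norm_num) hb'.2.le
    apply ContinuousOn.div (hσc.mono hsub)
      (continuousOn_const.mul (hFc.mono hsub))
    intro x hx
    have : 0 < F x := hFpos x ⟨by linarith [hx.1], by linarith [hx.2, hb'.2]⟩
    exact mul_ne_zero (by norm_num) this.ne'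
  -- pointwise lower bound on exp (p * Psi u) for u ∈ Ioo u₀ 1
  set A : ℝ := Real.exp (p * Psi γ σ2 u₀ + q * Real.log (1 - u₀)) with hAdef
  have hbound : ∀ u ∈ Set.Ioo u₀ 1, A * (1 - u) ^ (-q) ≤ Real.exp (p * Psi γ σ2 u) := by
    intro u hu
    have hu1 : u < 1 := hu.2
    have huu₀ : u₀ < u := hu.1
    have hint1 : IntervalIntegrable h volume (1/2) u₀ := by
      apply ((hhc u₀ hu₀).mono ?_).intervalIntegrable
      rw [Set.uIcc_of_le hu₀h]
    have hint2 : IntervalIntegrable h volume u₀ u := by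
      apply ((hhc u ⟨by linarith, hu1⟩).mono ?_).intervalIntegrable
      rw [Set.uIcc_of_le huu₀.le]
      exact Set.Icc_subset_Icc hu₀h le_rfl
    have hsplit : Psi γ σ2 u = Psi γ σ2 u₀ + ∫ v in u₀..u, h v := by
      rw [Psi, Psi]
      exact (intervalIntegral.integral_add_adjacent_intervals hint1 hint2).symm
    -- lower bound the integral
    have hlow : c * (Real.log (1 - u₀) - Real.log (1 - u)) ≤ ∫ v in u₀..u, h v := by
      have hderiv : ∀ v ∈ Set.uIcc u₀ u,
          HasDerivAt (fun w => -(c * Real.log (1 - w))) (c * (1 - v)⁻¹) v := by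
        intro v hv
        rw [Set.uIcc_of_le huu₀.le] at hv
        have hv1 : (1:ℝ) - v ≠ 0 := by
          have : v < 1 := lt_of_le_of_lt hv.2 hu1
          intro hcon; linarith [sub_eq_zero.mp hcon]
        have d1 : HasDerivAt (fun w : ℝ => 1 - w) (-1) v := by
          simpa using (hasDerivAt_id v).const_sub 1
        have d2 : HasDerivAt (fun w : ℝ => Real.log (1 - w)) (-1 / (1 - v)) v := d1.log hv1
        have d3 : HasDerivAt (fun w => -(c * Real.log (1 - w))) (-(c * (-1 / (1 - v)))) v :=
          (d2.const_mul c).neg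
        convert d3 using 1
        ring
      have hcont : IntervalIntegrable (fun v => c * (1 - v)⁻¹) volume u₀ u := by
        apply ContinuousOn.intervalIntegrable
        apply continuousOn_const.mul (ContinuousOn.inv₀ _ _)
        · exact (continuous_const.sub continuous_id).continuousOn
        · intro x hx
          rw [Set.uIcc_of_le huu₀.le] at hx
          have : x < 1 := lt_of_le_of_lt hx.2 hu1
          intro hcon; linarith [sub_eq_zero.mp hcon]
      have heval : ∫ v in u₀..u, c * (1 - v)⁻¹
          = -(c * Real.log (1 - u)) - -(c * Real.log (1 - u₀)) :=
        intervalIntegral.integral_eq_sub_of_hasDerivAt hderiv hcont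
      have hmono : ∫ v in u₀..u, c * (1 - v)⁻¹ ≤ ∫ v in u₀..u, h v := by
        apply intervalIntegral.integral_mono_on huu₀.le hcont hint2
        intro v hv
        have hvlt1 : v < 1 := lt_of_le_of_lt hv.2 hu1
        have hvIco : v ∈ Set.Ico u₀ 1 := ⟨hv.1, hvlt1⟩
        have hFv : 0 < F v := hFpos v ⟨by linarith [hv.1], hvlt1⟩
        have hFle : F v ≤ (L + ε) * (1 - v) := by
          have := (hb v hvIco).1; rw [hLdef]; exact this
        have hσv : S - ε ≤ σ2 v := (hb v hvIco).2
        have h1v : 0 < 1 - v := by linarith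
        have : c * (1 - v)⁻¹ = (S - ε) / (2 * ((L + ε) * (1 - v))) := by
          rw [hcdef, ← div_eq_mul_inv, div_div, mul_assoc]
        rw [this, hhdef]
        apply div_le_div₀ (le_of_lt (lt_of_lt_of_le (by linarith) hσv)) hσv (by positivity)
        nlinarith
      linarith [heval, hmono]
    have hppsi : p * Psi γ σ2 u₀ + q * (Real.log (1 - u₀) - Real.log (1 - u))
        ≤ p * Psi γ σ2 u := by
      rw [hsplit, mul_add, hqdef]
      have := mul_le_mul_of_nonneg_left hlow hp0.le
      nlinarith
    calc A * (1 - u) ^ (-q)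
        = Real.exp (p * Psi γ σ2 u₀ + q * Real.log (1 - u₀) + Real.log (1 - u) * (-q)) := by
          rw [hAdef, Real.rpow_def_of_pos (by linarith : (0:ℝ) < 1 - u), ← Real.exp_add]
      _ ≤ Real.exp (p * Psi γ σ2 u) := by
          apply Real.exp_le_exp.mpr
          nlinarith [hppsi]
  -- conclude
  have hA : 0 < A := Real.exp_pos _
  have hchain : (∫⁻ u in Set.Ioo u₀ 1, ENNReal.ofReal (A * (1 - u) ^ (-q)))
      ≤ ∫⁻ u in Set.Ioo (0:ℝ) 1, ENNReal.ofReal (Real.exp (p * Psi γ σ2 u)) := by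
    calc (∫⁻ u in Set.Ioo u₀ 1, ENNReal.ofReal (A * (1 - u) ^ (-q)))
        ≤ ∫⁻ u in Set.Ioo u₀ 1, ENNReal.ofReal (Real.exp (p * Psi γ σ2 u)) := by
          apply setLIntegral_mono' measurableSet_Ioo
          intro u hu
          exact ENNReal.ofReal_le_ofReal (hbound u hu)
      _ ≤ _ := by
          apply lintegral_mono_set
          exact Set.Ioo_subset_Ioo (by linarith) le_rfl
  have htop : (∫⁻ u in Set.Ioo u₀ 1, ENNReal.ofReal (A * (1 - u) ^ (-q))) = ⊤ := by
    have : ∀ u : ℝ, ENNReal.ofReal (A * (1 - u) ^ (-q))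
        = ENNReal.ofReal A * ENNReal.ofReal ((1 - u) ^ (-q)) := fun u =>
      ENNReal.ofReal_mul hA.le
    simp_rw [this]
    rw [lintegral_const_mul' _ _ ENNReal.ofReal_ne_top, div_top hu₀1 hq,
      ENNReal.mul_top (by simp [hA])]
  rw [eq_top_iff]
  rw [← htop]
  exact hchain
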